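/- Let I be a finite interval Markov chain, M a Markov chain satisfying I under the at-every-step semantics, and α a state label. Then there exist Markov chains M₁ and M₂, each satisfying I with the same structure as I (i.e., under the once-and-for-all semantics), such that P^{M₁}(◊α) ≤ P^{M}(◊α) ≤ P^{M₂}(◊α). -/

import Mathlib

open Classical

structure MC (S : Type) (A : Type) where
  s0 : S
  p : S → S → ℝ
  nonneg : ∀ s s', 0 ≤ p s s'
  sum_one : ∀ s, ∑ᶠ s', p s s' = 1
  V : S → Set A

namespace MC

variable {S A : Type}

/-- Probability of a finite path (product of transition probabilities). -/
def pathProb (p : S → S → ℝ) : S → List S → ℝ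
  | _, [] => 1
  | s, s' :: l => p s s' * pathProb p s' l

/-- `UntilPath φ ψ s l` : starting from `s`, the (nonempty) suffix `l` first reaches a
`ψ`-state at its last position, with `φ` holding at all strictly earlier positions after
the start. -/
inductive UntilPath (φ ψ : S → Prop) : S → List S → Prop
  | single {s s' : S} (h : ψ s') : UntilPath φ ψ s [s']
  | cons {s s' : S} {l : List S} (hψ : ¬ ψ s') (hφ : φ s') (h : UntilPath φ ψ s' l) :
      UntilPath φ ψ s (s' :: l)

/-- `P_s(φ U ψ)` : first-passage sum over until-paths. -/
noncomputable def untilProb (p : S → S → ℝ) (φ ψ : S → Prop) (s : S) : ℝ :=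
  ∑' l : {l : List S // UntilPath φ ψ s l}, pathProb p s l.1

/-- `P_s(◊ψ)` : probability of eventually reaching a `ψ`-state from `s`. -/
noncomputable def reachProb (p : S → S → ℝ) (ψ : S → Prop) (s : S) : ℝ :=
  if ψ s then 1 else untilProb p (fun _ => True) ψ s

/-- `P^M(◊α)` : probability of eventually reaching a state labeled `α` from the initial
state of `M`. -/
noncomputable def Preach (M : MC S A) (α : Set A) : ℝ :=
  reachProb M.p (fun s => M.V s = α) M.s0

/-- Reachability via positive-probability transitions. -/
def Reaches (p : S → S → ℝ) : S → S → Prop :=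
  Relation.ReflTransGen fun a b => 0 < p a b

end MC

/-- Interval Markov chain: each transition carries an interval `[Plo, Phi] ⊆ [0,1]`. -/
structure IMC (S : Type) (A : Type) where
  s0 : S
  Plo : S → S → ℝ
  Phi : S → S → ℝ
  V : S → Set A

/-- Once-and-for-all satisfaction `M ⊨ᵒ I`. -/
def SatO {S A : Type} (M : MC S A) (I : IMC S A) : Prop :=
  M.s0 = I.s0 ∧ M.V = I.V ∧
    ∀ s, MC.Reaches M.p M.s0 s → ∀ s', M.p s s' ∈ Set.Icc (I.Plo s s') (I.Phi s s')

/-- `R` is an at-every-step satisfaction relation between `M` and `I`. -/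
def IsSatRel {T S A : Type} (M : MC T A) (I : IMC S A) (R : T → S → Prop) : Prop :=
  R M.s0 I.s0 ∧
    ∀ t s, R t s → M.V t = I.V s ∧
      ∃ δ : T → S → ℝ,
        (∀ t' s', 0 ≤ δ t' s') ∧
        (∀ t', 0 < M.p t t' → ∑ᶠ s', δ t' s' = 1) ∧
        (∀ s', (∑ᶠ t', M.p t t' * δ t' s') ∈ Set.Icc (I.Plo s s') (I.Phi s s')) ∧
        (∀ t' s', 0 < δ t' s' → R t' s')

/-- At-every-step satisfaction `M ⊨ᵃ I`. -/
def SatA {T S A : Type} (M : MC T A) (I : IMC S A) : Prop :=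
  ∃ R, IsSatRel M I R

/-- `M` satisfies `I` with degree `n`. -/
def SatADeg {T S A : Type} (n : ℕ) (M : MC T A) (I : IMC S A) : Prop :=
  ∃ R, IsSatRel M I R ∧ ∀ t, {s | R t s}.ncard ≤ n

/-- Combined transition function on the disjoint union of two Markov chains. -/
def sumP {S T A : Type} (M : MC S A) (N : MC T A) : S ⊕ T → S ⊕ T → ℝ
  | .inl a, .inl b => M.p a b
  | .inr a, .inr b => N.p a b
  | _, _ => 0

/-- Combined labelling on the disjoint union. -/
def sumV {S T A : Type} (M : MC S A) (N : MC T A) : S ⊕ T → Set A :=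
  Sum.elim M.V N.V

/-- Probabilistic bisimilarity of two Markov chains. -/
def Bisimilar {S T A : Type} (M : MC S A) (N : MC T A) : Prop :=
  ∃ B : (S ⊕ T) → (S ⊕ T) → Prop,
    Equivalence B ∧ B (Sum.inl M.s0) (Sum.inr N.s0) ∧
    ∀ a b, B a b → sumV M N a = sumV M N b ∧
      ∀ C : Set (S ⊕ T), (∀ x y, B x y → (x ∈ C ↔ y ∈ C)) →
        (∑ᶠ c ∈ C, sumP M N a c) = ∑ᶠ c ∈ C, sumP M N b c

namespace Stmt5Aux
open MC

variable {S : Type} [Fintype S]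

lemma pathProb_nonneg {p : S → S → ℝ} (hp : ∀ s s', 0 ≤ p s s') : ∀ s l, 0 ≤ pathProb p s l
  | _, [] => zero_le_one
  | s, s' :: l => mul_nonneg (hp s s') (pathProb_nonneg hp s' l)

lemma untilPath_ne_nil {φ ψ : S → Prop} {s : S} {l : List S} (h : UntilPath φ ψ s l) :
    l ≠ [] := by cases h <;> simp

lemma untilPath_cons_elim {ψ : S → Prop} {s s' : S} {l : List S}
    (h : UntilPath (fun _ => True) ψ s (s' :: l)) :
    (ψ s' ∧ l = []) ∨ (¬ ψ s' ∧ UntilPath (fun _ => True) ψ s' l) := by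
  cases h with
  | single h => exact Or.inl ⟨h, rfl⟩
  | cons hψ hφ h => exact Or.inr ⟨hψ, h⟩

/-- Key finite-sum bound: sums of path probabilities over until-paths are bounded by a
superharmonic function. -/
lemma sum_pathProb_le {p : S → S → ℝ} (hp0 : ∀ s s', 0 ≤ p s s')
    {ψ : S → Prop} {C : Set S} (hC : ∀ s ∈ C, ∀ s', 0 < p s s' → s' ∈ C)
    {h : S → ℝ} (h0 : ∀ s ∈ C, 0 ≤ h s) (htar : ∀ s ∈ C, ψ s → 1 ≤ h s)
    (hsup : ∀ s ∈ C, ∑ s', p s s' * h s' ≤ h s) :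
    ∀ (n : ℕ) (s : S), s ∈ C → ∀ L : Finset (List S),
      (∀ l ∈ L, UntilPath (fun _ => True) ψ s l ∧ l.length ≤ n) →
      ∑ l ∈ L, pathProb p s l ≤ h s := by
  intro n
  induction n with
  | zero =>
    intro s hs L hL
    have hLe : L = ∅ := by
      rw [Finset.eq_empty_iff_forall_notMem]
      intro l hl
      obtain ⟨h1, h2⟩ := hL l hl
      have := untilPath_ne_nil h1
      cases l with
      | nil => exact this rfl
      | cons a l => simp at h2
    rw [hLe, Finset.sum_empty]
    exact h0 s hs
  | succ n ih =>
    intro s hs L hL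
    classical
    haveI : Inhabited S := ⟨s⟩
    -- encode each path as (head, tail)
    set e : List S → S × List S := fun l => (l.headI, l.tail) with he
    have hinj : Set.InjOn e L := by
      intro a ha b hb hab
      have ha' := untilPath_ne_nil (hL a ha).1
      have hb' := untilPath_ne_nil (hL b hb).1
      cases a with
      | nil => exact absurd rfl ha'
      | cons a0 a1 =>
        cases b with
        | nil => exact absurd rfl hb'
        | cons b0 b1 =>
          simp only [he, List.headI, List.tail, Prod.mk.injEq] at hab
          rw [hab.1, hab.2]
    have hcons : ∀ l ∈ L, l = l.headI :: l.tail := by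
      intro l hl
      have := untilPath_ne_nil (hL l hl).1
      cases l with
      | nil => exact absurd rfl this
      | cons a l => rfl
    set E := L.image e with hE
    have hsum1 : ∑ l ∈ L, pathProb p s l = ∑ x ∈ E, p s x.1 * pathProb p x.1 x.2 := by
      rw [hE, Finset.sum_image (fun a ha b hb hab => hinj ha hb hab)]
      refine Finset.sum_congr rfl fun l hl => ?_
      conv_lhs => rw [hcons l hl]
      rfl
    have hmemE : ∀ x ∈ E, (x.1 :: x.2) ∈ L ∧ UntilPath (fun _ => True) ψ s (x.1 :: x.2) ∧
        x.2.length ≤ n := by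
      intro x hx
      rw [hE, Finset.mem_image] at hx
      obtain ⟨l, hl, rfl⟩ := hx
      have h1 := hcons l hl
      constructor
      · rw [← h1]; exact hl
      constructor
      · rw [← h1]; exact (hL l hl).1
      · have h2 := (hL l hl).2
        rw [h1] at h2
        show l.tail.length ≤ n
        simp only [List.length_cons] at h2
        omega
    -- fiberwise decomposition
    have hfib : ∑ x ∈ E, p s x.1 * pathProb p x.1 x.2 =
        ∑ s' : S, ∑ x ∈ E.filter (fun x => x.1 = s'), p s x.1 * pathProb p x.1 x.2 := by
      exact (Finset.sum_fiberwise_of_maps_to (fun x _ => Finset.mem_univ x.1) _).symm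
    have key : ∀ s' : S, ∑ x ∈ E.filter (fun x => x.1 = s'), p s x.1 * pathProb p x.1 x.2
        ≤ p s s' * h s' := by
      intro s'
      have hval : ∀ x ∈ E.filter (fun x => x.1 = s'), p s x.1 * pathProb p x.1 x.2 =
          p s s' * pathProb p s' x.2 := by
        intro x hx
        rw [Finset.mem_filter] at hx
        rw [hx.2]
      rw [Finset.sum_congr rfl hval, ← Finset.mul_sum]
      by_cases hps : p s s' = 0
      · rw [hps, zero_mul, zero_mul]
      have hps' : 0 < p s s' := lt_of_le_of_ne (hp0 s s') (Ne.symm hps)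
      have hs'C : s' ∈ C := hC s hs s' hps'
      refine mul_le_mul_of_nonneg_left ?_ (hp0 s s')
      by_cases hψ : ψ s'
      · -- all tails are []
        have hsub : E.filter (fun x => x.1 = s') ⊆ {(s', ([] : List S))} := by
          intro x hx
          rw [Finset.mem_filter] at hx
          obtain ⟨hmem, hfst⟩ := hx
          obtain ⟨_, hup, _⟩ := hmemE x hmem
          rw [hfst] at hup
          rcases untilPath_cons_elim hup with ⟨_, htl⟩ | ⟨hn, _⟩
          · simp [Finset.mem_singleton]
            exact Prod.ext hfst htl
          · exact absurd hψ hn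
        calc ∑ x ∈ E.filter (fun x => x.1 = s'), pathProb p s' x.2
            ≤ ∑ x ∈ ({(s', ([] : List S))} : Finset (S × List S)), pathProb p s' x.2 :=
              Finset.sum_le_sum_of_subset_of_nonneg hsub
                (fun x _ _ => pathProb_nonneg hp0 s' x.2)
          _ = 1 := by simp [pathProb]
          _ ≤ h s' := htar s' hs'C hψ
      · -- tails are until-paths from s'
        have himg : ∑ x ∈ E.filter (fun x => x.1 = s'), pathProb p s' x.2 =
            ∑ l ∈ (E.filter (fun x => x.1 = s')).image Prod.snd, pathProb p s' l := by
          rw [Finset.sum_image]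
          intro a ha b hb hab
          rw [Finset.mem_coe, Finset.mem_filter] at ha hb
          exact Prod.ext (ha.2.trans hb.2.symm) hab
        rw [himg]
        refine ih s' hs'C _ fun l hl => ?_
        rw [Finset.mem_image] at hl
        obtain ⟨x, hx, rfl⟩ := hl
        rw [Finset.mem_filter] at hx
        obtain ⟨hmem, hfst⟩ := hx
        obtain ⟨_, hup, hlen⟩ := hmemE x hmem
        rw [hfst] at hup
        rcases untilPath_cons_elim hup with ⟨hψ', _⟩ | ⟨_, hup'⟩
        · exact absurd hψ' hψ
        · exact ⟨hup', hlen⟩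
    calc ∑ l ∈ L, pathProb p s l = _ := hsum1
      _ = _ := hfib
      _ ≤ ∑ s' : S, p s s' * h s' := Finset.sum_le_sum fun s' _ => key s'
      _ ≤ h s := hsup s hs


section
variable {p : S → S → ℝ} {ψ : S → Prop}

lemma untilProb_le_of_superharmonic (hp0 : ∀ s s', 0 ≤ p s s')
    {C : Set S} (hC : ∀ s ∈ C, ∀ s', 0 < p s s' → s' ∈ C)
    {h : S → ℝ} (h0 : ∀ s ∈ C, 0 ≤ h s) (htar : ∀ s ∈ C, ψ s → 1 ≤ h s)
    (hsup : ∀ s ∈ C, ∑ s', p s s' * h s' ≤ h s) {s : S} (hs : s ∈ C) :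
    untilProb p (fun _ => True) ψ s ≤ h s := by
  rw [untilProb]
  by_cases hsm : Summable (fun l : {l : List S // UntilPath (fun _ => True) ψ s l} =>
      pathProb p s l.1)
  · refine Summable.tsum_le_of_sum_le hsm fun u => ?_
    have himg : ∑ l ∈ u.image Subtype.val, pathProb p s l = ∑ i ∈ u, pathProb p s i.1 :=
      Finset.sum_image fun a _ b _ hab => Subtype.ext hab
    rw [← himg]
    refine sum_pathProb_le hp0 hC h0 htar hsup ((u.image Subtype.val).sup List.length) s hs _
      fun l hl => ?_
    rw [Finset.mem_image] at hl
    obtain ⟨x, hx, rfl⟩ := hl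
    exact ⟨x.2, Finset.le_sup (f := List.length) (Finset.mem_image_of_mem _ hx)⟩
  · rw [tsum_eq_zero_of_not_summable hsm]
    exact h0 s hs

lemma summable_untilProb (hp0 : ∀ s s', 0 ≤ p s s') (hp1 : ∀ s, ∑ s', p s s' = 1) (s : S) :
    Summable (fun l : {l : List S // UntilPath (fun _ => True) ψ s l} => pathProb p s l.1) := by
  refine summable_of_sum_le (c := 1) (fun l => pathProb_nonneg hp0 s l.1) fun u => ?_
  have himg : ∑ l ∈ u.image Subtype.val, pathProb p s l = ∑ i ∈ u, pathProb p s i.1 :=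
    Finset.sum_image fun a _ b _ hab => Subtype.ext hab
  rw [← himg]
  refine sum_pathProb_le (ψ := ψ) hp0 (C := Set.univ) (fun _ _ _ _ => trivial) (h := fun _ => 1)
    (fun _ _ => zero_le_one) (fun _ _ _ => le_refl 1)
    (fun s' _ => by simp [hp1 s']) ((u.image Subtype.val).sup List.length) s trivial _
    fun l hl => ?_
  rw [Finset.mem_image] at hl
  obtain ⟨x, hx, rfl⟩ := hl
  exact ⟨x.2, Finset.le_sup (f := List.length) (Finset.mem_image_of_mem _ hx)⟩

lemma untilProb_nonneg (hp0 : ∀ s s', 0 ≤ p s s') (s : S) :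
    0 ≤ untilProb p (fun _ => True) ψ s :=
  tsum_nonneg fun l => pathProb_nonneg hp0 s l.1

lemma untilProb_le_one (hp0 : ∀ s s', 0 ≤ p s s') (hp1 : ∀ s, ∑ s', p s s' = 1) (s : S) :
    untilProb p (fun _ => True) ψ s ≤ 1 :=
  untilProb_le_of_superharmonic hp0 (C := Set.univ) (fun _ _ _ _ => trivial)
    (fun _ _ => zero_le_one) (fun _ _ _ => le_refl 1) (fun s' _ => by simp [hp1 s']) trivial

lemma reachProb_nonneg (hp0 : ∀ s s', 0 ≤ p s s') (s : S) : 0 ≤ reachProb p ψ s := by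
  rw [reachProb]; split
  · exact zero_le_one
  · exact untilProb_nonneg hp0 s

lemma reachProb_le_one (hp0 : ∀ s s', 0 ≤ p s s') (hp1 : ∀ s, ∑ s', p s s' = 1) (s : S) :
    reachProb p ψ s ≤ 1 := by
  rw [reachProb]; split
  · exact le_refl 1
  · exact untilProb_le_one hp0 hp1 s

/-- Tail condition in the first-step decomposition. -/
def IsTail (ψ : S → Prop) (s' : S) (l' : List S) : Prop :=
  (ψ s' ∧ l' = []) ∨ (¬ ψ s' ∧ UntilPath (fun _ => True) ψ s' l')

/-- First-step decomposition of until-paths. -/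
noncomputable def untilEquiv (ψ : S → Prop) (s : S) [Inhabited S] :
    {l : List S // UntilPath (fun _ => True) ψ s l} ≃ Σ s' : S, {l' : List S // IsTail ψ s' l'} where
  toFun x := ⟨x.1.headI, ⟨x.1.tail, by
    obtain ⟨l, hl⟩ := x
    cases hl with
    | single h => exact Or.inl ⟨h, rfl⟩
    | cons hψ hφ h => exact Or.inr ⟨hψ, h⟩⟩⟩
  invFun y := ⟨y.1 :: y.2.1, by
    obtain ⟨s', l', hl⟩ := y
    rcases hl with ⟨h1, rfl⟩ | ⟨h1, h2⟩
    · exact UntilPath.single h1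
    · exact UntilPath.cons h1 trivial h2⟩
  left_inv x := by
    obtain ⟨l, hl⟩ := x
    have := untilPath_ne_nil hl
    cases l with
    | nil => exact absurd rfl this
    | cons a l => rfl
  right_inv y := by
    obtain ⟨s', l', hl⟩ := y
    rfl

lemma untilProb_fix (hp0 : ∀ s s', 0 ≤ p s s') (hp1 : ∀ s, ∑ s', p s s' = 1) (s : S) :
    untilProb p (fun _ => True) ψ s = ∑ s', p s s' * reachProb p ψ s' := by
  haveI : Inhabited S := ⟨s⟩
  have hsm := summable_untilProb (ψ := ψ) hp0 hp1 s
  have he : untilProb p (fun _ => True) ψ s =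
      ∑' y : Σ s' : S, {l' : List S // IsTail ψ s' l'}, p s y.1 * pathProb p y.1 y.2.1 := by
    rw [untilProb, ← Equiv.tsum_eq (untilEquiv ψ s).symm
      (fun x : {l : List S // UntilPath (fun _ => True) ψ s l} => pathProb p s x.1)]
    exact tsum_congr fun y => by
      obtain ⟨s', l', hl⟩ := y
      rfl
  have hsm2 : Summable (fun y : Σ s' : S, {l' : List S // IsTail ψ s' l'} =>
      p s y.1 * pathProb p y.1 y.2.1) := by
    have := (Equiv.summable_iff (untilEquiv ψ s).symm
      (f := fun x : {l : List S // UntilPath (fun _ => True) ψ s l} => pathProb p s x.1)).2 hsm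
    refine this.congr fun y => ?_
    obtain ⟨s', l', hl⟩ := y
    rfl
  rw [he, Summable.tsum_sigma hsm2, tsum_fintype]
  refine Finset.sum_congr rfl fun s' _ => ?_
  show ∑' (c : {l' : List S // IsTail ψ s' l'}), p s s' * pathProb p s' c.1
      = p s s' * reachProb p ψ s'
  rw [tsum_mul_left]
  congr 1
  by_cases hψ : ψ s'
  · rw [reachProb, if_pos hψ]
    have hdef : IsTail ψ s' [] := Or.inl ⟨hψ, rfl⟩
    have huniq : ∀ b' : {l' : List S // IsTail ψ s' l'}, b' ≠ ⟨[], hdef⟩ →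
        pathProb p s' b'.1 = 0 := by
      intro b' hb'
      exfalso
      apply hb'
      obtain ⟨l', hl'⟩ := b'
      rcases hl' with ⟨_, rfl⟩ | ⟨hn, _⟩
      · rfl
      · exact absurd hψ hn
    rw [tsum_eq_single _ huniq]
    rfl
  · rw [reachProb, if_neg hψ, untilProb]
    let eqv : {l' : List S // IsTail ψ s' l'} ≃
        {l : List S // UntilPath (fun _ => True) ψ s' l} :=
      ⟨fun x => ⟨x.1, by
          rcases x.2 with ⟨h1, _⟩ | ⟨_, h2⟩
          · exact absurd h1 hψ
          · exact h2⟩,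
        fun x => ⟨x.1, Or.inr ⟨hψ, x.2⟩⟩,
        fun x => rfl, fun x => rfl⟩
    rw [← Equiv.tsum_eq eqv (fun x => pathProb p s' x.1)]
    exact tsum_congr fun c => rfl

lemma reachProb_fix (hp0 : ∀ s s', 0 ≤ p s s') (hp1 : ∀ s, ∑ s', p s s' = 1) {s : S}
    (hψ : ¬ ψ s) : reachProb p ψ s = ∑ s', p s s' * reachProb p ψ s' := by
  rw [reachProb, if_neg hψ, untilProb_fix hp0 hp1]

lemma pathProb_eq_zero_of_closed (hp0 : ∀ s s', 0 ≤ p s s') {C : Set S}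
    (hC : ∀ s ∈ C, ∀ s', 0 < p s s' → s' ∈ C)
    (hnt : ∀ s ∈ C, ¬ ψ s) {s : S} {l : List S} (h : UntilPath (fun _ => True) ψ s l) :
    s ∈ C → pathProb p s l = 0 := by
  induction h with
  | @single s0 s' h =>
    intro hs
    by_cases hp : p s0 s' = 0
    · simp [pathProb, hp]
    · exact absurd h (hnt s' (hC s0 hs s' (lt_of_le_of_ne (hp0 s0 s') (Ne.symm hp))))
  | @cons s0 s' l hψ hφ h ih =>
    intro hs
    by_cases hp : p s0 s' = 0
    · simp [pathProb, hp]
    · have := ih (hC s0 hs s' (lt_of_le_of_ne (hp0 s0 s') (Ne.symm hp)))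
      simp [pathProb, this]

lemma untilProb_eq_zero_of_closed (hp0 : ∀ s s', 0 ≤ p s s') {C : Set S}
    (hC : ∀ s ∈ C, ∀ s', 0 < p s s' → s' ∈ C) (hnt : ∀ s ∈ C, ¬ ψ s) {s : S} (hs : s ∈ C) :
    untilProb p (fun _ => True) ψ s = 0 := by
  rw [untilProb]
  convert tsum_zero with l
  exact pathProb_eq_zero_of_closed hp0 hC hnt l.2 hs

lemma exists_pos_path (hp0 : ∀ s s', 0 ≤ p s s') {s : S}
    (h : untilProb p (fun _ => True) ψ s ≠ 0) :
    ∃ l, UntilPath (fun _ => True) ψ s l ∧ 0 < pathProb p s l := by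
  by_contra hcon
  push_neg at hcon
  apply h
  rw [untilProb]
  convert tsum_zero with l
  exact le_antisymm (hcon l.1 l.2) (pathProb_nonneg hp0 s l.1)

end

lemma reachProb_pos_eq {p : S → S → ℝ} {ψ : S → Prop} {s : S} (h : ψ s) :
    reachProb p ψ s = 1 := if_pos h

lemma reachProb_neg_eq {p : S → S → ℝ} {ψ : S → Prop} {s : S} (h : ¬ ψ s) :
    reachProb p ψ s = untilProb p (fun _ => True) ψ s := if_neg h

end Stmt5Aux

/-- if `M ⊨ᵃ I` then there are `M₁, M₂ ⊨ᵒ I` (same structure as `I`) with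
`P^{M₁}(◊α) ≤ P^{M}(◊α) ≤ P^{M₂}(◊α)`. -/
theorem stmt5 {T S A : Type} [Finite T] [Finite S]
    (M : MC T A) (I : IMC S A) (α : Set A) (h : SatA M I) :
    ∃ M₁ M₂ : MC S A, SatO M₁ I ∧ SatO M₂ I ∧
      M₁.Preach α ≤ M.Preach α ∧ M.Preach α ≤ M₂.Preach α := by
  classical
  obtain ⟨instT⟩ := nonempty_fintype T
  obtain ⟨instS⟩ := nonempty_fintype S
  obtain ⟨R, hRsat⟩ := h
  obtain ⟨hR0, hR⟩ := hRsat
  haveI : Nonempty S := ⟨I.s0⟩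
  set ψM : T → Prop := fun t => M.V t = α with hψMdef
  set ψI : S → Prop := fun s => I.V s = α with hψIdef
  set P : T → ℝ := fun t => MC.reachProb M.p ψM t with hPset
  have hPdef : ∀ t, P t = MC.reachProb M.p ψM t := fun t => rfl
  have hM0 : ∀ t t', 0 ≤ M.p t t' := M.nonneg
  have hM1 : ∀ t, ∑ t', M.p t t' = 1 := fun t => by
    rw [← finsum_eq_sum_of_fintype]; exact M.sum_one t
  have hlab : ∀ t s, R t s → M.V t = I.V s := fun t s hts => (hR t s hts).1
  have hlab' : ∀ t s, R t s → (ψM t ↔ ψI s) := fun t s hts => by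
    show M.V t = α ↔ I.V s = α
    rw [hlab t s hts]
  have hδ : ∀ t s, R t s → ∃ δ : T → S → ℝ, (∀ t' s', 0 ≤ δ t' s') ∧
      (∀ t', 0 < M.p t t' → ∑ s', δ t' s' = 1) ∧
      (∀ s', (∑ t', M.p t t' * δ t' s') ∈ Set.Icc (I.Plo s s') (I.Phi s s')) ∧
      (∀ t' s', 0 < δ t' s' → R t' s') := by
    intro t s hts
    obtain ⟨δ, h1, h2, h3, h4⟩ := (hR t s hts).2
    refine ⟨δ, h1, fun t' ht' => ?_, fun s' => ?_, h4⟩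
    · rw [← finsum_eq_sum_of_fintype]; exact h2 t' ht'
    · rw [← finsum_eq_sum_of_fintype]; exact h3 s'
  choose δf hδ0 hδ1 hδicc hδR using hδ
  set C : Set S := {s | ∃ t, R t s} with hCdef
  have hs0C : I.s0 ∈ C := ⟨M.s0, hR0⟩
  -- generic facts about the projected distributions
  have hswap : ∀ t s (hts : R t s) (g : T → ℝ),
      ∑ s', ∑ t', M.p t t' * δf t s hts t' s' * g t' = ∑ t', M.p t t' * g t' := by
    intro t s hts g
    rw [Finset.sum_comm]
    refine Finset.sum_congr rfl fun t' _ => ?_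
    by_cases hp : M.p t t' = 0
    · simp [hp]
    · have hpos : 0 < M.p t t' := lt_of_le_of_ne (hM0 t t') (Ne.symm hp)
      calc ∑ s', M.p t t' * δf t s hts t' s' * g t'
          = M.p t t' * g t' * ∑ s', δf t s hts t' s' := by
            rw [Finset.mul_sum]
            exact Finset.sum_congr rfl fun s' _ => by ring
        _ = M.p t t' * g t' := by rw [hδ1 t s hts t' hpos, mul_one]
  have hq0 : ∀ t s (hts : R t s) s', 0 ≤ ∑ t', M.p t t' * δf t s hts t' s' :=
    fun t s hts s' => Finset.sum_nonneg fun t' _ => mul_nonneg (hM0 t t') (hδ0 t s hts t' s')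
  have hq1 : ∀ t s (hts : R t s), ∑ s', ∑ t', M.p t t' * δf t s hts t' s' = 1 := by
    intro t s hts
    have h1 := hswap t s hts (fun _ => 1)
    simp only [mul_one] at h1
    rw [h1, hM1 t]
  have hqC : ∀ t s (hts : R t s) s', 0 < ∑ t', M.p t t' * δf t s hts t' s' → s' ∈ C := by
    intro t s hts s' hpos
    obtain ⟨t', _, ht'⟩ := Finset.exists_ne_zero_of_sum_ne_zero (ne_of_gt hpos)
    have h1 : 0 < M.p t t' * δf t s hts t' s' :=
      lt_of_le_of_ne (mul_nonneg (hM0 t t') (hδ0 t s hts t' s')) (Ne.symm ht')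
    have h2 : 0 < δf t s hts t' s' := by
      rcases mul_pos_iff.mp h1 with ⟨_, hh⟩ | ⟨hh, _⟩
      · exact hh
      · exact absurd (hM0 t t') (not_le.mpr hh)
    exact ⟨t', hδR t s hts t' s' h2⟩
  have hP0 : ∀ t, 0 ≤ P t := fun t => Stmt5Aux.reachProb_nonneg hM0 t
  have hP1 : ∀ t, P t ≤ 1 := fun t => Stmt5Aux.reachProb_le_one hM0 hM1 t
  have hcardne : (Fintype.card S : ℝ) ≠ 0 := Nat.cast_ne_zero.mpr Fintype.card_ne_zero
  have hunif0 : (0:ℝ) ≤ (Fintype.card S : ℝ)⁻¹ := by positivity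
  have hunif1 : ∑ _s' : S, (Fintype.card S : ℝ)⁻¹ = 1 := by
    rw [Finset.sum_const, Finset.card_univ, nsmul_eq_mul, mul_inv_cancel₀ hcardne]
  -- ================= minimizing chain =================
  set c₁ : S → Prop := fun s => ∃ t, R t s ∧ ∀ t', R t' s → P t ≤ P t' with hc₁def
  have hC1 : ∀ s, s ∈ C → c₁ s := by
    intro s hs
    have hFne : (Finset.univ.filter (fun t => R t s)).Nonempty := by
      obtain ⟨t, ht⟩ := hs
      exact ⟨t, by simp [ht]⟩
    obtain ⟨t0, ht0, hmin⟩ := Finset.exists_min_image _ P hFne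
    rw [Finset.mem_filter] at ht0
    exact ⟨t0, ht0.2, fun t' ht' => hmin t' (by simp [ht'])⟩
  set M₁ : MC S A :=
    { s0 := I.s0
      p := fun s s' =>
        if hc : c₁ s then ∑ t', M.p hc.choose t' * δf hc.choose s hc.choose_spec.1 t' s'
        else (Fintype.card S : ℝ)⁻¹
      nonneg := by
        intro s s'
        split
        · exact hq0 _ s _ s'
        · exact hunif0
      sum_one := by
        intro s
        rw [finsum_eq_sum_of_fintype]
        by_cases hc : c₁ s
        · simp only [dif_pos hc]
          exact hq1 _ s hc.choose_spec.1
        · simp only [dif_neg hc]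
          exact hunif1
      V := I.V } with hM₁def
  have hp₁eq : ∀ s (hc : c₁ s) s', M₁.p s s' =
      ∑ t', M.p hc.choose t' * δf hc.choose s hc.choose_spec.1 t' s' :=
    fun s hc s' => dif_pos hc
  have hM₁0 : ∀ s s', 0 ≤ M₁.p s s' := M₁.nonneg
  have hM₁1 : ∀ s, ∑ s', M₁.p s s' = 1 := fun s => by
    rw [← finsum_eq_sum_of_fintype]; exact M₁.sum_one s
  have hcl₁ : ∀ s ∈ C, ∀ s', 0 < M₁.p s s' → s' ∈ C := by
    intro s hs s' hpos
    rw [hp₁eq s (hC1 s hs) s'] at hpos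
    exact hqC _ s _ s' hpos
  have hSatO₁ : SatO M₁ I := by
    refine ⟨rfl, rfl, fun s hreach s' => ?_⟩
    have hreach' : Relation.ReflTransGen (fun a b => 0 < M₁.p a b) I.s0 s := hreach
    clear hreach
    have hsC : s ∈ C := by
      induction hreach' with
      | refl => exact hs0C
      | tail h1 h2 ih => exact hcl₁ _ ih _ h2
    rw [hp₁eq s (hC1 s hsC) s']
    exact hδicc _ s _ s'
  set h₁ : S → ℝ := fun s => if hc : c₁ s then P hc.choose else 1 with hh₁def
  have hh₁eq : ∀ s (hc : c₁ s), h₁ s = P hc.choose := fun s hc => dif_pos hc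
  have hh₁0 : ∀ s, 0 ≤ h₁ s := by
    intro s
    by_cases hc : c₁ s
    · rw [hh₁eq s hc]; exact hP0 _
    · have : h₁ s = 1 := dif_neg hc
      rw [this]; exact zero_le_one
  have hh₁le1 : ∀ s, h₁ s ≤ 1 := by
    intro s
    by_cases hc : c₁ s
    · rw [hh₁eq s hc]; exact hP1 _
    · have : h₁ s = 1 := dif_neg hc
      rw [this]
  have htar₁ : ∀ s ∈ C, ψI s → 1 ≤ h₁ s := by
    intro s hs hψ
    have hc := hC1 s hs
    rw [hh₁eq s hc]
    have hψM : ψM hc.choose := (hlab' _ s hc.choose_spec.1).2 hψ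
    rw [hPdef, Stmt5Aux.reachProb_pos_eq hψM]
  have hsup₁ : ∀ s ∈ C, ∑ s', M₁.p s s' * h₁ s' ≤ h₁ s := by
    intro s hs
    have hc := hC1 s hs
    by_cases hψ : ψI s
    · calc ∑ s', M₁.p s s' * h₁ s'
          ≤ ∑ s', M₁.p s s' * 1 := Finset.sum_le_sum fun s' _ =>
            mul_le_mul_of_nonneg_left (hh₁le1 s') (hM₁0 s s')
        _ = 1 := by simp only [mul_one]; exact hM₁1 s
        _ ≤ h₁ s := htar₁ s hs hψ
    · have hψM : ¬ ψM hc.choose := fun hcon => hψ ((hlab' _ s hc.choose_spec.1).1 hcon)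
      have step1 : ∑ s', M₁.p s s' * h₁ s' ≤
          ∑ s', ∑ t', M.p hc.choose t' * δf hc.choose s hc.choose_spec.1 t' s' * P t' := by
        refine Finset.sum_le_sum fun s' _ => ?_
        rw [hp₁eq s hc s', Finset.sum_mul]
        refine Finset.sum_le_sum fun t' _ => ?_
        by_cases hz : M.p hc.choose t' * δf hc.choose s hc.choose_spec.1 t' s' = 0
        · rw [hz, zero_mul, zero_mul]
        · have hzpos : 0 < M.p hc.choose t' * δf hc.choose s hc.choose_spec.1 t' s' :=
            lt_of_le_of_ne (mul_nonneg (hM0 _ _) (hδ0 _ _ _ _ _)) (Ne.symm hz)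
          have hδpos : 0 < δf hc.choose s hc.choose_spec.1 t' s' := by
            rcases mul_pos_iff.mp hzpos with ⟨_, hh⟩ | ⟨hh, _⟩
            · exact hh
            · exact absurd (hM0 _ _) (not_le.mpr hh)
          have hRt's' : R t' s' := hδR _ _ _ _ _ hδpos
          have hc' := hC1 s' ⟨t', hRt's'⟩
          have hle : h₁ s' ≤ P t' := by
            rw [hh₁eq s' hc']
            exact hc'.choose_spec.2 t' hRt's'
          exact mul_le_mul_of_nonneg_left hle (le_of_lt hzpos)
      have step2 := hswap hc.choose s hc.choose_spec.1 P
      have step3 : ∑ t', M.p hc.choose t' * P t' = P hc.choose := by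
        rw [hPdef]
        exact (Stmt5Aux.reachProb_fix hM0 hM1 hψM).symm
      rw [hh₁eq s hc]
      calc ∑ s', M₁.p s s' * h₁ s' ≤ _ := step1
        _ = _ := step2
        _ = P hc.choose := step3
  have hineq₁ : MC.Preach M₁ α ≤ MC.Preach M α := by
    have e1 : MC.Preach M₁ α = MC.reachProb M₁.p ψI I.s0 := rfl
    have e2 : MC.Preach M α = P M.s0 := rfl
    rw [e1, e2]
    by_cases hψ : ψI I.s0
    · have hψM0 : ψM M.s0 := (hlab' _ _ hR0).2 hψ
      rw [Stmt5Aux.reachProb_pos_eq hψ, hPdef, Stmt5Aux.reachProb_pos_eq hψM0]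
    · rw [Stmt5Aux.reachProb_neg_eq hψ]
      have hb := Stmt5Aux.untilProb_le_of_superharmonic hM₁0 hcl₁
        (fun s _ => hh₁0 s) htar₁ hsup₁ hs0C
      refine hb.trans ?_
      rw [hh₁eq I.s0 (hC1 _ hs0C)]
      exact (hC1 _ hs0C).choose_spec.2 M.s0 hR0
  -- ================= maximizing chain =================
  set N : T → ℕ := fun t =>
    if hx : ∃ n, ∃ l, MC.UntilPath (fun _ => True) ψM t l ∧ 0 < MC.pathProb M.p t l ∧
        l.length = n then Nat.find hx else 0 with hNdef
  have hNeq : ∀ t (hx : ∃ n, ∃ l, MC.UntilPath (fun _ => True) ψM t l ∧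
      0 < MC.pathProb M.p t l ∧ l.length = n), N t = Nat.find hx := fun t hx => dif_pos hx
  set c₂ : S → Prop := fun s => ∃ t, R t s ∧ (∀ t', R t' s → P t' ≤ P t) ∧
    (∀ t', R t' s → P t' = P t → N t ≤ N t') with hc₂def
  have hC2 : ∀ s, s ∈ C → c₂ s := by
    intro s hs
    have hFne : (Finset.univ.filter (fun t => R t s)).Nonempty := by
      obtain ⟨t, ht⟩ := hs
      exact ⟨t, by simp [ht]⟩
    obtain ⟨tm, htm, hmax⟩ := Finset.exists_max_image _ P hFne
    have htmR : R tm s := (Finset.mem_filter.mp htm).2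
    have hGne : ((Finset.univ.filter (fun t => R t s)).filter (fun t => P t = P tm)).Nonempty :=
      ⟨tm, by simp [htmR]⟩
    obtain ⟨t0, ht0, hminN⟩ := Finset.exists_min_image _ N hGne
    rw [Finset.mem_filter, Finset.mem_filter] at ht0
    refine ⟨t0, ht0.1.2, fun t' ht' => ?_, fun t' ht' hPeq => ?_⟩
    · exact (hmax t' (by simp [ht'])).trans (le_of_eq ht0.2.symm)
    · exact hminN t' (Finset.mem_filter.mpr ⟨by simp [ht'], hPeq.trans ht0.2⟩)
  set M₂ : MC S A :=
    { s0 := I.s0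
      p := fun s s' =>
        if hc : c₂ s then ∑ t', M.p hc.choose t' * δf hc.choose s hc.choose_spec.1 t' s'
        else (Fintype.card S : ℝ)⁻¹
      nonneg := by
        intro s s'
        split
        · exact hq0 _ s _ s'
        · exact hunif0
      sum_one := by
        intro s
        rw [finsum_eq_sum_of_fintype]
        by_cases hc : c₂ s
        · simp only [dif_pos hc]
          exact hq1 _ s hc.choose_spec.1
        · simp only [dif_neg hc]
          exact hunif1
      V := I.V } with hM₂def
  have hp₂eq : ∀ s (hc : c₂ s) s', M₂.p s s' =
      ∑ t', M.p hc.choose t' * δf hc.choose s hc.choose_spec.1 t' s' :=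
    fun s hc s' => dif_pos hc
  have hM₂0 : ∀ s s', 0 ≤ M₂.p s s' := M₂.nonneg
  have hM₂1 : ∀ s, ∑ s', M₂.p s s' = 1 := fun s => by
    rw [← finsum_eq_sum_of_fintype]; exact M₂.sum_one s
  have hcl₂ : ∀ s ∈ C, ∀ s', 0 < M₂.p s s' → s' ∈ C := by
    intro s hs s' hpos
    rw [hp₂eq s (hC2 s hs) s'] at hpos
    exact hqC _ s _ s' hpos
  have hSatO₂ : SatO M₂ I := by
    refine ⟨rfl, rfl, fun s hreach s' => ?_⟩
    have hreach' : Relation.ReflTransGen (fun a b => 0 < M₂.p a b) I.s0 s := hreach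
    clear hreach
    have hsC : s ∈ C := by
      induction hreach' with
      | refl => exact hs0C
      | tail h1 h2 ih => exact hcl₂ _ ih _ h2
    rw [hp₂eq s (hC2 s hsC) s']
    exact hδicc _ s _ s'
  set h₂ : S → ℝ := fun s => if hc : c₂ s then P hc.choose else 0 with hh₂def
  have hh₂eq : ∀ s (hc : c₂ s), h₂ s = P hc.choose := fun s hc => dif_pos hc
  have hh₂le1 : ∀ s, h₂ s ≤ 1 := by
    intro s
    by_cases hc : c₂ s
    · rw [hh₂eq s hc]; exact hP1 _
    · have : h₂ s = 0 := dif_neg hc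
      rw [this]; exact zero_le_one
  set W : S → ℝ := fun s => MC.reachProb M₂.p ψI s with hWset
  have hWdef : ∀ s, W s = MC.reachProb M₂.p ψI s := fun s => rfl
  have hsub : ∀ s ∈ C, ¬ ψI s → h₂ s ≤ ∑ s', M₂.p s s' * h₂ s' := by
    intro s hs hψ
    have hc := hC2 s hs
    have hψM : ¬ ψM hc.choose := fun hcon => hψ ((hlab' _ s hc.choose_spec.1).1 hcon)
    have step3 : P hc.choose = ∑ t', M.p hc.choose t' * P t' := by
      rw [hPdef]
      exact Stmt5Aux.reachProb_fix hM0 hM1 hψM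
    have step2 := (hswap hc.choose s hc.choose_spec.1 P).symm
    have step1 : ∑ s', ∑ t', M.p hc.choose t' * δf hc.choose s hc.choose_spec.1 t' s' * P t' ≤
        ∑ s', M₂.p s s' * h₂ s' := by
      refine Finset.sum_le_sum fun s' _ => ?_
      rw [hp₂eq s hc s', Finset.sum_mul]
      refine Finset.sum_le_sum fun t' _ => ?_
      by_cases hz : M.p hc.choose t' * δf hc.choose s hc.choose_spec.1 t' s' = 0
      · rw [hz, zero_mul, zero_mul]
      · have hzpos : 0 < M.p hc.choose t' * δf hc.choose s hc.choose_spec.1 t' s' :=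
          lt_of_le_of_ne (mul_nonneg (hM0 _ _) (hδ0 _ _ _ _ _)) (Ne.symm hz)
        have hδpos : 0 < δf hc.choose s hc.choose_spec.1 t' s' := by
          rcases mul_pos_iff.mp hzpos with ⟨_, hh⟩ | ⟨hh, _⟩
          · exact hh
          · exact absurd (hM0 _ _) (not_le.mpr hh)
        have hRt's' : R t' s' := hδR _ _ _ _ _ hδpos
        have hc' := hC2 s' ⟨t', hRt's'⟩
        have hle : P t' ≤ h₂ s' := by
          rw [hh₂eq s' hc']
          exact hc'.choose_spec.2.1 t' hRt's'
        exact mul_le_mul_of_nonneg_left hle (le_of_lt hzpos)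
    rw [hh₂eq s hc]
    calc P hc.choose = _ := step3
      _ = _ := step2
      _ ≤ _ := step1
  have hclaim : ∀ s ∈ C, h₂ s ≤ W s := by
    set d : S → ℝ := fun s => h₂ s - W s with hddef
    have hdval : ∀ s, d s = h₂ s - W s := fun s => rfl
    have hCfinne : (Finset.univ.filter (fun s => s ∈ C)).Nonempty := ⟨I.s0, by simp [hs0C]⟩
    obtain ⟨sm, hsmF, hsmax⟩ := Finset.exists_max_image _ d hCfinne
    have hdle : ∀ s ∈ C, d s ≤ d sm := fun s hs => hsmax s (by simp [hs])
    by_cases hm : d sm ≤ 0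
    · intro s hs
      have h1 : d s ≤ 0 := le_trans (hdle s hs) hm
      rw [hdval] at h1
      linarith
    push_neg at hm
    exfalso
    set D : Set S := {s | s ∈ C ∧ d s = d sm} with hDdef
    have hsmD : sm ∈ D := ⟨(Finset.mem_filter.mp hsmF).2, rfl⟩
    have hDnt : ∀ s ∈ D, ¬ ψI s := by
      intro s hs hψ
      have hWs : W s = 1 := by rw [hWdef]; exact Stmt5Aux.reachProb_pos_eq hψ
      have h1 : h₂ s ≤ 1 := hh₂le1 s
      have h2 : d s = d sm := hs.2
      rw [hdval, hWs] at h2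
      linarith
    have hDcl : ∀ s ∈ D, ∀ s', 0 < M₂.p s s' → s' ∈ D := by
      intro s hsD s' hpos'
      have hsC := hsD.1
      have hnψ := hDnt s hsD
      have hWfix : W s = ∑ s'', M₂.p s s'' * W s'' := by
        rw [hWdef]
        exact Stmt5Aux.reachProb_fix hM₂0 hM₂1 hnψ
      have h1 : d s ≤ ∑ s'', M₂.p s s'' * d s'' := by
        have ha := hsub s hsC hnψ
        have hsplit : ∑ s'', M₂.p s s'' * d s'' =
            (∑ s'', M₂.p s s'' * h₂ s'') - ∑ s'', M₂.p s s'' * W s'' := by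
          rw [← Finset.sum_sub_distrib]
          refine Finset.sum_congr rfl fun s'' _ => ?_
          rw [hdval]; ring
        rw [hdval, hsplit, ← hWfix]
        linarith
      have h2 : ∑ s'', M₂.p s s'' * (d sm - d s'') ≤ 0 := by
        have hexp : ∑ s'', M₂.p s s'' * (d sm - d s'') =
            (∑ s'', M₂.p s s'' * d sm) - ∑ s'', M₂.p s s'' * d s'' := by
          rw [← Finset.sum_sub_distrib]
          refine Finset.sum_congr rfl fun s'' _ => ?_
          ring
        have hconst : ∑ s'', M₂.p s s'' * d sm = d sm := by
          rw [← Finset.sum_mul, hM₂1 s, one_mul]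
        rw [hexp, hconst]
        have := hsD.2
        linarith
      have h3 : ∀ s'' ∈ Finset.univ, 0 ≤ M₂.p s s'' * (d sm - d s'') := by
        intro s'' _
        by_cases hz : M₂.p s s'' = 0
        · rw [hz, zero_mul]
        · have hzp : 0 < M₂.p s s'' := lt_of_le_of_ne (hM₂0 s s'') (Ne.symm hz)
          have hs''C : s'' ∈ C := hcl₂ s hsC s'' hzp
          have := hdle s'' hs''C
          exact mul_nonneg (le_of_lt hzp) (by linarith)
      have h4 := (Finset.sum_eq_zero_iff_of_nonneg h3).mp
        (le_antisymm h2 (Finset.sum_nonneg h3))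
      have h5 := h4 s' (Finset.mem_univ s')
      have hdseq : d s' = d sm := by
        rcases mul_eq_zero.mp h5 with hh | hh
        · exact absurd hh (ne_of_gt hpos')
        · linarith
      exact ⟨hcl₂ s hsC s' hpos', hdseq⟩
    have hW0D : ∀ s ∈ D, W s = 0 := by
      intro s hs
      rw [hWdef, Stmt5Aux.reachProb_neg_eq (hDnt s hs)]
      exact Stmt5Aux.untilProb_eq_zero_of_closed hM₂0 hDcl hDnt hs
    have hh₂D : ∀ s ∈ D, h₂ s = d sm := by
      intro s hs
      have h1 := hs.2
      have h2 := hW0D s hs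
      rw [hdval, h2] at h1
      linarith
    -- forcing lemma
    have hforce : ∀ s (hsD : s ∈ D) (hc : c₂ s) t', 0 < M.p hc.choose t' →
        P t' = d sm ∧ ∃ s', R t' s' ∧ s' ∈ D := by
      intro s hsD hc
      have hts := hc.choose_spec.1
      have succ : ∀ t'', 0 < M.p hc.choose t'' → ∃ s'', R t'' s'' ∧ s'' ∈ D := by
        intro t'' hpt
        have hδsum : ∑ s'', δf hc.choose s hts t'' s'' = 1 := hδ1 _ s hts t'' hpt
        obtain ⟨s'', _, hne⟩ := Finset.exists_ne_zero_of_sum_ne_zero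
          (by rw [hδsum]; exact one_ne_zero)
        have hδp : 0 < δf hc.choose s hts t'' s'' :=
          lt_of_le_of_ne (hδ0 _ _ _ _ _) (Ne.symm hne)
        have hR'' : R t'' s'' := hδR _ _ _ _ _ hδp
        have hppos : 0 < M₂.p s s'' := by
          rw [hp₂eq s hc s'']
          refine lt_of_lt_of_le (mul_pos hpt hδp) ?_
          exact Finset.single_le_sum
            (f := fun t' => M.p hc.choose t' * δf hc.choose s hts t' s'')
            (fun i _ => mul_nonneg (hM0 _ _) (hδ0 _ _ _ _ _)) (Finset.mem_univ t'')
        exact ⟨s'', hR'', hDcl s hsD s'' hppos⟩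
      have hPle : ∀ t'', 0 < M.p hc.choose t'' → P t'' ≤ d sm := by
        intro t'' hpt
        obtain ⟨s'', hR'', hs''D⟩ := succ t'' hpt
        have hc'' := hC2 s'' hs''D.1
        have h1 : P t'' ≤ P hc''.choose := hc''.choose_spec.2.1 t'' hR''
        have h2 : P hc''.choose = d sm := by
          rw [← hh₂eq s'' hc'']
          exact hh₂D s'' hs''D
        linarith
      have hnψs := hDnt s hsD
      have hnψM : ¬ ψM hc.choose := fun hcon => hnψs ((hlab' _ s hts).1 hcon)
      have hfix : ∑ t'', M.p hc.choose t'' * P t'' = P hc.choose := by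
        rw [hPdef]
        exact (Stmt5Aux.reachProb_fix hM0 hM1 hnψM).symm
      have hPs : P hc.choose = d sm := by
        rw [← hh₂eq s hc]
        exact hh₂D s hsD
      have hnn : ∀ t'' ∈ Finset.univ, 0 ≤ M.p hc.choose t'' * (d sm - P t'') := by
        intro t'' _
        by_cases hz : M.p hc.choose t'' = 0
        · rw [hz, zero_mul]
        · have hzp : 0 < M.p hc.choose t'' := lt_of_le_of_ne (hM0 _ _) (Ne.symm hz)
          have := hPle t'' hzp
          exact mul_nonneg (le_of_lt hzp) (by linarith)
      have hzero : ∀ t'' ∈ Finset.univ, M.p hc.choose t'' * (d sm - P t'') = 0 := by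
        apply (Finset.sum_eq_zero_iff_of_nonneg hnn).mp
        have hexp : ∑ t'', M.p hc.choose t'' * (d sm - P t'') =
            (∑ t'', M.p hc.choose t'' * d sm) - ∑ t'', M.p hc.choose t'' * P t'' := by
          rw [← Finset.sum_sub_distrib]
          refine Finset.sum_congr rfl fun t'' _ => ?_
          ring
        have hconst : ∑ t'', M.p hc.choose t'' * d sm = d sm := by
          rw [← Finset.sum_mul, hM1 _, one_mul]
        rw [hexp, hconst, hfix, hPs, sub_self]
      intro t' hpt
      refine ⟨?_, succ t' hpt⟩
      have h5 := hzero t' (Finset.mem_univ t')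
      rcases mul_eq_zero.mp h5 with hh | hh
      · exact absurd hh (ne_of_gt hpt)
      · linarith
    -- minimal-counterexample contradiction
    set μ : S → ℕ := fun s => if hc : c₂ s then N hc.choose else 0 with hμdef
    have hμeq : ∀ s (hc : c₂ s), μ s = N hc.choose := fun s hc => dif_pos hc
    have hDfinne : (Finset.univ.filter (fun s => s ∈ D)).Nonempty := ⟨sm, by simp [hsmD]⟩
    obtain ⟨s₀, hs₀F, hminD⟩ := Finset.exists_min_image _ μ hDfinne
    have hs₀D : s₀ ∈ D := (Finset.mem_filter.mp hs₀F).2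
    have hc₀ := hC2 s₀ hs₀D.1
    have hnψ₀ := hDnt s₀ hs₀D
    have hnψM₀ : ¬ ψM hc₀.choose := fun hcon => hnψ₀ ((hlab' _ s₀ hc₀.choose_spec.1).1 hcon)
    have hPs₀ : P hc₀.choose = d sm := by
      rw [← hh₂eq s₀ hc₀]
      exact hh₂D s₀ hs₀D
    have hupne : MC.untilProb M.p (fun _ => True) ψM hc₀.choose ≠ 0 := by
      have h1 : P hc₀.choose = MC.untilProb M.p (fun _ => True) ψM hc₀.choose := by
        rw [hPdef]
        exact Stmt5Aux.reachProb_neg_eq hnψM₀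
      rw [← h1, hPs₀]
      exact ne_of_gt hm
    obtain ⟨l, hl, hlpos⟩ := Stmt5Aux.exists_pos_path hM0 hupne
    have hex : ∃ n, ∃ l', MC.UntilPath (fun _ => True) ψM hc₀.choose l' ∧
        0 < MC.pathProb M.p hc₀.choose l' ∧ l'.length = n := ⟨l.length, l, hl, hlpos, rfl⟩
    obtain ⟨l₀, hl₀, hl₀pos, hl₀len⟩ := Nat.find_spec hex
    cases l₀ with
    | nil => exact (Stmt5Aux.untilPath_ne_nil hl₀) rfl
    | cons t1 l2 =>
      have hl₀pos' : 0 < M.p hc₀.choose t1 * MC.pathProb M.p t1 l2 := hl₀pos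
      have hsplit : 0 < M.p hc₀.choose t1 ∧ 0 < MC.pathProb M.p t1 l2 := by
        rcases mul_pos_iff.mp hl₀pos' with ⟨a, b⟩ | ⟨a, _⟩
        · exact ⟨a, b⟩
        · exact absurd (hM0 _ _) (not_le.mpr a)
      obtain ⟨hPt1, s₁, hRt1s₁, hs₁D⟩ := hforce s₀ hs₀D hc₀ t1 hsplit.1
      rcases Stmt5Aux.untilPath_cons_elim hl₀ with ⟨hψt1, hl2nil⟩ | ⟨hnψt1, hup2⟩
      · exact hDnt s₁ hs₁D ((hlab' t1 s₁ hRt1s₁).1 hψt1)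
      · have hex1 : ∃ n, ∃ l', MC.UntilPath (fun _ => True) ψM t1 l' ∧
            0 < MC.pathProb M.p t1 l' ∧ l'.length = n := ⟨l2.length, l2, hup2, hsplit.2, rfl⟩
        have hN1 : N t1 ≤ l2.length := by
          rw [hNeq t1 hex1]
          exact Nat.find_le ⟨l2, hup2, hsplit.2, rfl⟩
        have hN0 : N hc₀.choose = l2.length + 1 := by
          rw [hNeq _ hex, ← hl₀len]
          simp
        have hc₁ := hC2 s₁ hs₁D.1
        have hPeq : P t1 = P hc₁.choose := by
          have e1 : P hc₁.choose = d sm := by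
            rw [← hh₂eq s₁ hc₁]
            exact hh₂D s₁ hs₁D
          rw [hPt1, e1]
        have htb : N hc₁.choose ≤ N t1 := hc₁.choose_spec.2.2 t1 hRt1s₁ hPeq
        have hlt : μ s₁ < μ s₀ := by
          rw [hμeq s₁ hc₁, hμeq s₀ hc₀, hN0]
          omega
        exact absurd (hminD s₁ (by simp [hs₁D])) (not_le.mpr hlt)
  have hineq₂ : MC.Preach M α ≤ MC.Preach M₂ α := by
    have e1 : MC.Preach M₂ α = W I.s0 := rfl
    have e2 : MC.Preach M α = P M.s0 := rfl
    rw [e1, e2]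
    have hc := hC2 I.s0 hs0C
    have h1 : P M.s0 ≤ P hc.choose := hc.choose_spec.2.1 M.s0 hR0
    have h2 : P hc.choose = h₂ I.s0 := (hh₂eq I.s0 hc).symm
    have h3 : h₂ I.s0 ≤ W I.s0 := hclaim I.s0 hs0C
    linarith
  exact ⟨M₁, M₂, hSatO₁, hSatO₂, hineq₁, hineq₂⟩
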